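/- For all positive integers a and t and all integers x, y, z, the lattice graph of the 4×4 matrix L with rows (2a,0,a,x),(0,2a,a,y),(0,0,a,z),(0,0,0,t) is not linearly symmetric; that is, every lift of the body-centered cubic lattice graph BCC(a) yields a non-edge-symmetric graph. -/

import Mathlib

open Matrix

/-- The subgroup (submodule) `Mℤⁿ` generated by the columns of `M`. -/
def colSpan {ι : Type*} [Fintype ι] [DecidableEq ι] (M : Matrix ι ι ℤ) :
    Submodule ℤ (ι → ℤ) :=
  LinearMap.range M.mulVecLin

/-- The vertex set `ℤⁿ/Mℤⁿ` of the lattice graph. -/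
abbrev LatticeVertex {ι : Type*} [Fintype ι] [DecidableEq ι] (M : Matrix ι ι ℤ) :=
  (ι → ℤ) ⧸ colSpan M

/-- The `i`-th standard basis vector of `ℤⁿ`. -/
def stdBasis {ι : Type*} [DecidableEq ι] (i : ι) : ι → ℤ := Pi.single i 1

/-- The lattice graph `𝒢(M)`. -/
def latticeGraph {ι : Type*} [Fintype ι] [DecidableEq ι] (M : Matrix ι ι ℤ) :
    SimpleGraph (LatticeVertex M) where
  Adj v w := v ≠ w ∧ ∃ i : ι,
      v - w = Submodule.Quotient.mk (stdBasis i) ∨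
      w - v = Submodule.Quotient.mk (stdBasis i)
  symm := by constructor; rintro v w ⟨hne, i, h⟩; exact ⟨hne.symm, i, h.symm⟩
  loopless := ⟨fun v h => h.1 rfl⟩

/-- The subgraph of `𝒢(M)` spanned by the directions in `S`. -/
def spannedSubgraph {ι : Type*} [Fintype ι] [DecidableEq ι] (M : Matrix ι ι ℤ) (S : Set ι) :
    SimpleGraph (AddSubgroup.closure
      ((fun i => (Submodule.Quotient.mk (stdBasis i) : LatticeVertex M)) '' S)) where
  Adj v w := v ≠ w ∧ ∃ i ∈ S,
      (v : LatticeVertex M) - (w : LatticeVertex M) = Submodule.Quotient.mk (stdBasis i) ∨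
      (w : LatticeVertex M) - (v : LatticeVertex M) = Submodule.Quotient.mk (stdBasis i)
  symm := by constructor; rintro v w ⟨hne, i, hiS, h⟩; exact ⟨hne.symm, i, hiS, h.symm⟩
  loopless := ⟨fun v h => h.1 rfl⟩

/-- The projection of `𝒢(M)` over `e_j`: the subgraph spanned by all other directions. -/
def projGraph {ι : Type*} [Fintype ι] [DecidableEq ι] (M : Matrix ι ι ℤ) (j : ι) :=
  spannedSubgraph M {i | i ≠ j}

/-- The torus graph `T(a₁,…,aₙ)`. -/
def torusGraph {n : ℕ} (a : Fin n → ℕ) : SimpleGraph (∀ i, ZMod (a i)) where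
  Adj x y := x ≠ y ∧ ∃ i, (∀ j, j ≠ i → x j = y j) ∧ (x i = y i + 1 ∨ y i = x i + 1)
  symm := by
    constructor
    rintro x y ⟨hne, i, hj, h⟩
    exact ⟨hne.symm, i, fun j hji => (hj j hji).symm, h.symm⟩
  loopless := ⟨fun x h => h.1 rfl⟩

/-- A signed permutation matrix: exactly one nonzero entry, equal to `±1`,
in each row and each column. -/
def IsSignedPerm {n : ℕ} (P : Matrix (Fin n) (Fin n) ℤ) : Prop :=
  (∀ i j, P i j = 0 ∨ P i j = 1 ∨ P i j = -1) ∧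
  (∀ i, ∃! j, P i j ≠ 0) ∧ (∀ j, ∃! i, P i j ≠ 0)

/-- `𝒢(M)` is linearly symmetric: for every `i` there is a signed permutation matrix
inducing an automorphism of `𝒢(M)` sending `e₁` to `±e_i`. -/
def IsLinearlySymmetric {n : ℕ} (M : Matrix (Fin n) (Fin n) ℤ) : Prop :=
  ∀ i : Fin n, ∃ P : Matrix (Fin n) (Fin n) ℤ, IsSignedPerm P ∧
    (∃ Q : Matrix (Fin n) (Fin n) ℤ, P * M = M * Q) ∧
    (P.mulVec (stdBasis (⟨0, i.pos⟩ : Fin n)) = stdBasis i ∨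
      P.mulVec (stdBasis (⟨0, i.pos⟩ : Fin n)) = -stdBasis i)

/- ===================== auxiliary lemmas ===================== -/

private lemma bcc_arith (a x y z t u0 u1 u2 u3 d0 d1 d2 : ℤ) (haz : a ≠ 0)
    (h0 : 2*a*u0 + a*u2 + x*u3 = a*d0) (h1 : 2*a*u1 + a*u2 + y*u3 = a*d1)
    (h2 : a*u2 + z*u3 = a*d2) (h3 : u3 = 0)
    (hd : ¬(2 ∣ (d0 - d2)) ∨ ¬(2 ∣ (d1 - d2))) : False := by
  subst h3
  have e0 : 2*u0 + u2 = d0 := mul_left_cancel₀ haz (by linarith)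
  have e1 : 2*u1 + u2 = d1 := mul_left_cancel₀ haz (by linarith)
  have e2 : u2 = d2 := mul_left_cancel₀ haz (by linarith)
  omega

private lemma bcc_notMem (a t : ℕ) (ha : 0 < a) (ht : 0 < t) (x y z : ℤ) (i j : Fin 4)
    (hi : i ≠ 3) (hj : j ≠ 3) (hij : i ≠ j) :
    ((a:ℤ) • _root_.stdBasis i - (a:ℤ) • _root_.stdBasis j) ∉
      colSpan !![(2 * a : ℤ), 0, a, x; 0, 2 * a, a, y; 0, 0, a, z; 0, 0, 0, (t : ℤ)] := by
  rintro ⟨u, hu⟩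
  simp only [mulVecLin_apply] at hu
  have haz : ((a:ℕ):ℤ) ≠ 0 := by exact_mod_cast ha.ne'
  have h0 := congrFun hu 0
  have h1 := congrFun hu 1
  have h2 := congrFun hu 2
  have h3 := congrFun hu 3
  fin_cases i <;> fin_cases j <;>
    simp [Matrix.mulVec, dotProduct, Fin.sum_univ_four, _root_.stdBasis,
      Pi.single_apply] at h0 h1 h2 h3 <;>
    first
      | exact hij rfl
      | exact hi rfl
      | exact hj rfl
      | exact bcc_arith ((a:ℕ):ℤ) x y z ((t:ℕ):ℤ) (u 0) (u 1) (u 2) (u 3) 1 (-1) 0 haz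
          (by linear_combination h0) (by linear_combination h1) (by linear_combination h2)
          (h3.resolve_left ht.ne') (by decide)
      | exact bcc_arith ((a:ℕ):ℤ) x y z ((t:ℕ):ℤ) (u 0) (u 1) (u 2) (u 3) 1 0 (-1) haz
          (by linear_combination h0) (by linear_combination h1) (by linear_combination h2)
          (h3.resolve_left ht.ne') (by decide)
      | exact bcc_arith ((a:ℕ):ℤ) x y z ((t:ℕ):ℤ) (u 0) (u 1) (u 2) (u 3) (-1) 1 0 haz
          (by linear_combination h0) (by linear_combination h1) (by linear_combination h2)
          (h3.resolve_left ht.ne') (by decide)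
      | exact bcc_arith ((a:ℕ):ℤ) x y z ((t:ℕ):ℤ) (u 0) (u 1) (u 2) (u 3) 0 1 (-1) haz
          (by linear_combination h0) (by linear_combination h1) (by linear_combination h2)
          (h3.resolve_left ht.ne') (by decide)
      | exact bcc_arith ((a:ℕ):ℤ) x y z ((t:ℕ):ℤ) (u 0) (u 1) (u 2) (u 3) (-1) 0 1 haz
          (by linear_combination h0) (by linear_combination h1) (by linear_combination h2)
          (h3.resolve_left ht.ne') (by decide)
      | exact bcc_arith ((a:ℕ):ℤ) x y z ((t:ℕ):ℤ) (u 0) (u 1) (u 2) (u 3) 0 (-1) 1 haz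
          (by linear_combination h0) (by linear_combination h1) (by linear_combination h2)
          (h3.resolve_left ht.ne') (by decide)

private lemma bcc_mem2 (a t : ℕ) (x y z : ℤ) (j : Fin 4) (hj : j ≠ 3) :
    ((2*(a:ℤ)) • _root_.stdBasis j) ∈
      colSpan !![(2 * a : ℤ), 0, a, x; 0, 2 * a, a, y; 0, 0, a, z; 0, 0, 0, (t : ℤ)] := by
  fin_cases j
  · refine ⟨![1,0,0,0], ?_⟩
    funext r
    fin_cases r <;>
      simp [mulVecLin_apply, Matrix.mulVec, dotProduct, Fin.sum_univ_four,
        _root_.stdBasis, Pi.single_apply] <;> ring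
  · refine ⟨![0,1,0,0], ?_⟩
    funext r
    fin_cases r <;>
      simp [mulVecLin_apply, Matrix.mulVec, dotProduct, Fin.sum_univ_four,
        _root_.stdBasis, Pi.single_apply] <;> ring
  · refine ⟨![-1,-1,2,0], ?_⟩
    funext r
    fin_cases r <;>
      simp [mulVecLin_apply, Matrix.mulVec, dotProduct, Fin.sum_univ_four,
        _root_.stdBasis, Pi.single_apply] <;> ring
  · exact absurd rfl hj

private lemma bcc_memsum (a t : ℕ) (x y z : ℤ) :
    ((a:ℤ) • (_root_.stdBasis (0:Fin 4) + _root_.stdBasis 1 + _root_.stdBasis 2)) ∈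
      colSpan !![(2 * a : ℤ), 0, a, x; 0, 2 * a, a, y; 0, 0, a, z; 0, 0, 0, (t : ℤ)] := by
  refine ⟨![0,0,1,0], ?_⟩
  funext r
  fin_cases r <;>
    simp [mulVecLin_apply, Matrix.mulVec, dotProduct, Fin.sum_univ_four,
      _root_.stdBasis, Pi.single_apply]

private lemma bcc_push {M P Q : Matrix (Fin 4) (Fin 4) ℤ} (hPQ : P * M = M * Q)
    {v : Fin 4 → ℤ} (hv : v ∈ colSpan M) : P.mulVec v ∈ colSpan M := by
  obtain ⟨u, hu⟩ := hv
  simp only [mulVecLin_apply] at hu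
  refine ⟨Q.mulVec u, ?_⟩
  simp only [mulVecLin_apply]
  rw [← hu, Matrix.mulVec_mulVec, Matrix.mulVec_mulVec, hPQ]

private lemma bcc_col {P : Matrix (Fin 4) (Fin 4) ℤ} (hP : IsSignedPerm P) (j : Fin 4) :
    ∃ i : Fin 4, (P i j = 1 ∨ P i j = -1) ∧
      P.mulVec (_root_.stdBasis j) = P i j • _root_.stdBasis i := by
  obtain ⟨i, hi, huniq⟩ := hP.2.2 j
  refine ⟨i, ?_, ?_⟩
  · rcases hP.1 i j with h | h | h
    · exact absurd h hi
    · exact Or.inl h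
    · exact Or.inr h
  · funext r
    rw [_root_.stdBasis, Matrix.mulVec_single]
    by_cases hr : r = i
    · subst hr; simp [_root_.stdBasis, Pi.single_apply]
    · have hz : P r j = 0 := by
        by_contra h
        exact hr (huniq r h)
      simp [hz, _root_.stdBasis, Pi.single_apply, hr]

private lemma bcc_colinj {P : Matrix (Fin 4) (Fin 4) ℤ} (hP : IsSignedPerm P) {i j j' : Fin 4}
    (h1 : P i j ≠ 0) (h2 : P i j' ≠ 0) : j = j' := by
  obtain ⟨c, _, hu⟩ := hP.2.1 i
  rw [hu j h1, hu j' h2]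

private lemma bcc_flip {L : Submodule ℤ (Fin 4 → ℤ)} {a c : ℤ} (hc : c = 1 ∨ c = -1)
    {e : Fin 4 → ℤ} (h2 : (2*a) • e ∈ L) : (a*c) • e - a • e ∈ L := by
  rcases hc with rfl | rfl
  · have h : (a*1) • e - a • e = (0 : Fin 4 → ℤ) := by module
    rw [h]; exact L.zero_mem
  · have h : (a*(-1)) • e - a • e = -((2*a) • e) := by module
    rw [h]; exact L.neg_mem h2

private lemma bcc_sum_single (r1 r2 r3 : Fin 4) (h1 : r1 ≠ 3) (h2 : r2 ≠ 3) (h3 : r3 ≠ 3)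
    (h12 : r1 ≠ r2) (h13 : r1 ≠ r3) (h23 : r2 ≠ r3) :
    _root_.stdBasis r1 + _root_.stdBasis r2 + _root_.stdBasis r3 =
      _root_.stdBasis (0:Fin 4) + _root_.stdBasis 1 + _root_.stdBasis 2 := by
  fin_cases r1 <;> fin_cases r2 <;> fin_cases r3 <;> simp_all <;>
    (funext k; fin_cases k <;> simp [_root_.stdBasis, Pi.single_apply])

/-- no lift of `BCC(a)` is linearly symmetric. -/
theorem lift_of_BCC_not_linearlySymmetric (a t : ℕ) (ha : 0 < a) (ht : 0 < t)
    (x y z : ℤ) :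
    ¬ IsLinearlySymmetric
      !![(2 * a : ℤ), 0, a, x; 0, 2 * a, a, y; 0, 0, a, z; 0, 0, 0, (t : ℤ)] := by
  intro hsym
  obtain ⟨A, hA, ⟨QA, hQA⟩, hA0⟩ := hsym 1
  obtain ⟨B, hB, ⟨QB, hQB⟩, hB0⟩ := hsym 3
  have hA0' : A.mulVec (_root_.stdBasis (0 : Fin 4)) = _root_.stdBasis 1 ∨
      A.mulVec (_root_.stdBasis (0 : Fin 4)) = -_root_.stdBasis 1 := hA0
  have hB0' : B.mulVec (_root_.stdBasis (0 : Fin 4)) = _root_.stdBasis 3 ∨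
      B.mulVec (_root_.stdBasis (0 : Fin 4)) = -_root_.stdBasis 3 := hB0
  clear hA0 hB0
  obtain ⟨iA, hsA, hcolA0⟩ := bcc_col hA 0
  obtain ⟨s, hsS, hcolA3⟩ := bcc_col hA 3
  obtain ⟨iB, hsB, hcolB0⟩ := bcc_col hB 0
  obtain ⟨r1, hs1, hcolB1⟩ := bcc_col hB 1
  obtain ⟨r2, hs2, hcolB2⟩ := bcc_col hB 2
  obtain ⟨r3, hs3, hcolB3⟩ := bcc_col hB 3
  -- identify the rows hit by column 0 of A and B
  have hiA : iA = 1 := by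
    by_contra hne
    rcases hA0' with h | h <;>
    · have h2 := congrFun (hcolA0.symm.trans h) iA
      simp [_root_.stdBasis, Pi.single_apply, hne] at h2
      rcases hsA with h3 | h3 <;> rw [h3] at h2 <;> norm_num at h2
  subst hiA
  have hiB : iB = 3 := by
    by_contra hne
    rcases hB0' with h | h <;>
    · have h2 := congrFun (hcolB0.symm.trans h) iB
      simp [_root_.stdBasis, Pi.single_apply, hne] at h2
      rcases hsB with h3 | h3 <;> rw [h3] at h2 <;> norm_num at h2
  subst hiB
  -- nonvanishing entries
  have hA10 : A 1 0 ≠ 0 := by rcases hsA with h | h <;> rw [h] <;> norm_num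
  have hAs3 : A s 3 ≠ 0 := by rcases hsS with h | h <;> rw [h] <;> norm_num
  have hB30 : B 3 0 ≠ 0 := by rcases hsB with h | h <;> rw [h] <;> norm_num
  have hBr11 : B r1 1 ≠ 0 := by rcases hs1 with h | h <;> rw [h] <;> norm_num
  have hBr22 : B r2 2 ≠ 0 := by rcases hs2 with h | h <;> rw [h] <;> norm_num
  have hBr33 : B r3 3 ≠ 0 := by rcases hs3 with h | h <;> rw [h] <;> norm_num
  -- basic distinctness
  have hr1ne3 : r1 ≠ 3 := by
    intro h; rw [h] at hBr11
    exact absurd (bcc_colinj hB hB30 hBr11) (by decide)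
  have hr2ne3 : r2 ≠ 3 := by
    intro h; rw [h] at hBr22
    exact absurd (bcc_colinj hB hB30 hBr22) (by decide)
  have hr3ne3 : r3 ≠ 3 := by
    intro h; rw [h] at hBr33
    exact absurd (bcc_colinj hB hB30 hBr33) (by decide)
  have hr12 : r1 ≠ r2 := by
    intro h; rw [h] at hBr11
    exact absurd (bcc_colinj hB hBr11 hBr22) (by decide)
  have hr13 : r1 ≠ r3 := by
    intro h; rw [h] at hBr11
    exact absurd (bcc_colinj hB hBr11 hBr33) (by decide)
  have hr23 : r2 ≠ r3 := by
    intro h; rw [h] at hBr22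
    exact absurd (bcc_colinj hB hBr22 hBr33) (by decide)
  have hsne1 : s ≠ 1 := by
    intro h; rw [h] at hAs3
    exact absurd (bcc_colinj hA hAs3 hA10) (by decide)
  -- step 1 : a·e₃ − a·e_{r3} ∈ L
  have hmemsum := bcc_memsum a t x y z
  have hw := bcc_push hQB hmemsum
  have e1 : B.mulVec ((a:ℤ) • (_root_.stdBasis (0:Fin 4) + _root_.stdBasis 1 + _root_.stdBasis 2)) =
      ((a:ℤ) * B 3 0) • _root_.stdBasis (3:Fin 4) + ((a:ℤ) * B r1 1) • _root_.stdBasis r1 +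
        ((a:ℤ) * B r2 2) • _root_.stdBasis r2 := by
    rw [Matrix.mulVec_smul, Matrix.mulVec_add, Matrix.mulVec_add, hcolB0, hcolB1, hcolB2]
    module
  rw [e1] at hw
  have hw2 := Submodule.smul_mem _ (B 3 0) hw
  have hw3 : ((a:ℤ)) • _root_.stdBasis (3:Fin 4) +
      ((a:ℤ) * (B 3 0 * B r1 1)) • _root_.stdBasis r1 +
      ((a:ℤ) * (B 3 0 * B r2 2)) • _root_.stdBasis r2 ∈
      colSpan !![(2 * a : ℤ), 0, a, x; 0, 2 * a, a, y; 0, 0, a, z; 0, 0, 0, (t : ℤ)] := by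
    have e2 : ((a:ℤ)) • _root_.stdBasis (3:Fin 4) +
        ((a:ℤ) * (B 3 0 * B r1 1)) • _root_.stdBasis r1 +
        ((a:ℤ) * (B 3 0 * B r2 2)) • _root_.stdBasis r2 =
        B 3 0 • (((a:ℤ) * B 3 0) • _root_.stdBasis (3:Fin 4) +
          ((a:ℤ) * B r1 1) • _root_.stdBasis r1 + ((a:ℤ) * B r2 2) • _root_.stdBasis r2) := by
      rcases hsB with h | h <;> rw [h] <;> module
    rw [e2]; exact hw2
  have hc1 : B 3 0 * B r1 1 = 1 ∨ B 3 0 * B r1 1 = -1 := by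
    rcases hsB with h | h <;> rcases hs1 with h' | h' <;> rw [h, h'] <;> norm_num
  have hc2 : B 3 0 * B r2 2 = 1 ∨ B 3 0 * B r2 2 = -1 := by
    rcases hsB with h | h <;> rcases hs2 with h' | h' <;> rw [h, h'] <;> norm_num
  have hsum3 : (a:ℤ) • _root_.stdBasis (3:Fin 4) + (a:ℤ) • _root_.stdBasis r1 +
      (a:ℤ) • _root_.stdBasis r2 ∈
      colSpan !![(2 * a : ℤ), 0, a, x; 0, 2 * a, a, y; 0, 0, a, z; 0, 0, 0, (t : ℤ)] := by
    have hf1 := bcc_flip hc1 (bcc_mem2 a t x y z r1 hr1ne3)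
    have hf2 := bcc_flip hc2 (bcc_mem2 a t x y z r2 hr2ne3)
    have h := Submodule.sub_mem _ (Submodule.sub_mem _ hw3 hf1) hf2
    convert h using 1
    module
  have hsum012 : (a:ℤ) • _root_.stdBasis r1 + (a:ℤ) • _root_.stdBasis r2 +
      (a:ℤ) • _root_.stdBasis r3 ∈
      colSpan !![(2 * a : ℤ), 0, a, x; 0, 2 * a, a, y; 0, 0, a, z; 0, 0, 0, (t : ℤ)] := by
    have e3 : (a:ℤ) • _root_.stdBasis r1 + (a:ℤ) • _root_.stdBasis r2 +
        (a:ℤ) • _root_.stdBasis r3 =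
        (a:ℤ) • (_root_.stdBasis (0:Fin 4) + _root_.stdBasis 1 + _root_.stdBasis 2) := by
      rw [← bcc_sum_single r1 r2 r3 hr1ne3 hr2ne3 hr3ne3 hr12 hr13 hr23]
      module
    rw [e3]; exact hmemsum
  have hdiff : (a:ℤ) • _root_.stdBasis (3:Fin 4) - (a:ℤ) • _root_.stdBasis r3 ∈
      colSpan !![(2 * a : ℤ), 0, a, x; 0, 2 * a, a, y; 0, 0, a, z; 0, 0, 0, (t : ℤ)] := by
    have h := Submodule.sub_mem _ hsum3 hsum012
    convert h using 1
    module
  -- step 2 : r3 = 0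
  have hr30 : r3 = 0 := by
    by_contra hne
    obtain ⟨p, hsp, hcolBr3⟩ := bcc_col hB r3
    have hBpr3 : B p r3 ≠ 0 := by rcases hsp with h | h <;> rw [h] <;> norm_num
    have hpne3 : p ≠ 3 := by
      intro h; rw [h] at hBpr3
      exact hne (bcc_colinj hB hB30 hBpr3).symm
    have hpner3 : p ≠ r3 := by
      intro h; rw [h] at hBpr3
      exact (Ne.symm hr3ne3) (bcc_colinj hB hBr33 hBpr3)
    have hp := bcc_push hQB hdiff
    have e4 : B.mulVec ((a:ℤ) • _root_.stdBasis (3:Fin 4) - (a:ℤ) • _root_.stdBasis r3) =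
        ((a:ℤ) * B r3 3) • _root_.stdBasis r3 - ((a:ℤ) * B p r3) • _root_.stdBasis p := by
      rw [sub_eq_add_neg, Matrix.mulVec_add, Matrix.mulVec_neg, Matrix.mulVec_smul,
        Matrix.mulVec_smul, hcolB3, hcolBr3]
      module
    rw [e4] at hp
    have hp2 := Submodule.smul_mem _ (B r3 3) hp
    have hp3 : (a:ℤ) • _root_.stdBasis r3 - ((a:ℤ) * (B r3 3 * B p r3)) • _root_.stdBasis p ∈
        colSpan !![(2 * a : ℤ), 0, a, x; 0, 2 * a, a, y; 0, 0, a, z; 0, 0, 0, (t : ℤ)] := by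
      have e5 : (a:ℤ) • _root_.stdBasis r3 - ((a:ℤ) * (B r3 3 * B p r3)) • _root_.stdBasis p =
          B r3 3 • (((a:ℤ) * B r3 3) • _root_.stdBasis r3 -
            ((a:ℤ) * B p r3) • _root_.stdBasis p) := by
        rcases hs3 with h | h <;> rw [h] <;> module
      rw [e5]; exact hp2
    have hcp : B r3 3 * B p r3 = 1 ∨ B r3 3 * B p r3 = -1 := by
      rcases hs3 with h | h <;> rcases hsp with h' | h' <;> rw [h, h'] <;> norm_num
    have hfin : (a:ℤ) • _root_.stdBasis r3 - (a:ℤ) • _root_.stdBasis p ∈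
        colSpan !![(2 * a : ℤ), 0, a, x; 0, 2 * a, a, y; 0, 0, a, z; 0, 0, 0, (t : ℤ)] := by
      have h := Submodule.add_mem _ hp3 (bcc_flip hcp (bcc_mem2 a t x y z p hpne3))
      convert h using 1
      module
    exact bcc_notMem a t ha ht x y z r3 p hr3ne3 hpne3 (Ne.symm hpner3) hfin
  subst hr30
  -- step 3 : transport through A
  have hp := bcc_push hQA hdiff
  have e6 : A.mulVec ((a:ℤ) • _root_.stdBasis (3:Fin 4) - (a:ℤ) • _root_.stdBasis (0:Fin 4)) =
      ((a:ℤ) * A s 3) • _root_.stdBasis s - ((a:ℤ) * A 1 0) • _root_.stdBasis (1:Fin 4) := by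
    rw [sub_eq_add_neg, Matrix.mulVec_add, Matrix.mulVec_neg, Matrix.mulVec_smul,
      Matrix.mulVec_smul, hcolA3, hcolA0]
    module
  rw [e6] at hp
  have hp2 := Submodule.smul_mem _ (A s 3) hp
  have hp3 : (a:ℤ) • _root_.stdBasis s - ((a:ℤ) * (A s 3 * A 1 0)) • _root_.stdBasis (1:Fin 4) ∈
      colSpan !![(2 * a : ℤ), 0, a, x; 0, 2 * a, a, y; 0, 0, a, z; 0, 0, 0, (t : ℤ)] := by
    have e7 : (a:ℤ) • _root_.stdBasis s - ((a:ℤ) * (A s 3 * A 1 0)) • _root_.stdBasis (1:Fin 4) =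
        A s 3 • (((a:ℤ) * A s 3) • _root_.stdBasis s -
          ((a:ℤ) * A 1 0) • _root_.stdBasis (1:Fin 4)) := by
      rcases hsS with h | h <;> rw [h] <;> module
    rw [e7]; exact hp2
  have hcs : A s 3 * A 1 0 = 1 ∨ A s 3 * A 1 0 = -1 := by
    rcases hsS with h | h <;> rcases hsA with h' | h' <;> rw [h, h'] <;> norm_num
  have hse : (a:ℤ) • _root_.stdBasis s - (a:ℤ) • _root_.stdBasis (1:Fin 4) ∈
      colSpan !![(2 * a : ℤ), 0, a, x; 0, 2 * a, a, y; 0, 0, a, z; 0, 0, 0, (t : ℤ)] := by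
    have h := Submodule.add_mem _ hp3 (bcc_flip hcs (bcc_mem2 a t x y z 1 (by decide)))
    convert h using 1
    module
  by_cases hs3' : s = 3
  · subst hs3'
    have h01 : (a:ℤ) • _root_.stdBasis (0:Fin 4) - (a:ℤ) • _root_.stdBasis (1:Fin 4) ∈
        colSpan !![(2 * a : ℤ), 0, a, x; 0, 2 * a, a, y; 0, 0, a, z; 0, 0, 0, (t : ℤ)] := by
      have h := Submodule.sub_mem _ hse hdiff
      convert h using 1
      module
    exact bcc_notMem a t ha ht x y z 0 1 (by decide) (by decide) (by decide) h01
  · exact bcc_notMem a t ha ht x y z s 1 hs3' (by decide) hsne1 hse
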